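/- arXiv:1901.05276 — 3 statements merged into one kernel-verified Lean document; each statement's English description precedes it below -/
import Mathlib

section
/- If E ⊆ ℂ is connected and contains a sequence of bounded simply connected domains (G_n) with ∂G_n ⊆ E, G_n ⊆ G_{n+1}, and ⋃ G_n = ℂ (i.e., E is a spider's web), then the image E' = exp(E) is connected and for every point z ∈ ℂ* there is an open set U ⊆ ℂ*, whose closure in the Riemann sphere avoids 0 and ∞, with z ∈ U and ∂U ⊆ E'. -/
open Complex Set

/-- A set `X ⊆ ℂ*` is bounded in `ℂ*` if it is contained in a closed annulus
`{z : r ≤ |z| ≤ R}` with `0 < r`. -/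
def BoundedInCStar (X : Set ℂ) : Prop :=
  ∃ r R : ℝ, 0 < r ∧ X ⊆ {z : ℂ | r ≤ ‖z‖ ∧ ‖z‖ ≤ R}

/-- If `E` is a spider's web in `ℂ`, then `exp(E)` is connected and separates every
point of `ℂ*` from `{0, ∞}`. -/
theorem stmt0 (E : Set ℂ) (hE : IsConnected E)
    (G : ℕ → Set ℂ)
    (hopen : ∀ n, IsOpen (G n)) (hconn : ∀ n, IsConnected (G n))
    (hbdd : ∀ n, Bornology.IsBounded (G n))
    (hsc : ∀ n, SimplyConnectedSpace (G n))
    (hfront : ∀ n, frontier (G n) ⊆ E)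
    (hmono : ∀ n, G n ⊆ G (n + 1))
    (hunion : ⋃ n, G n = univ) :
    IsConnected (Complex.exp '' E) ∧
    ∀ z : ℂ, z ≠ 0 → ∃ U : Set ℂ, IsOpen U ∧ U ⊆ {(0 : ℂ)}ᶜ ∧ BoundedInCStar U ∧
      z ∈ U ∧ frontier U ⊆ Complex.exp '' E := by
  refine ⟨hE.image _ Complex.continuous_exp.continuousOn, ?_⟩
  intro z hz
  -- choose a preimage of z under exp
  obtain ⟨w, hw⟩ : ∃ w, Complex.exp w = z := by
    have : z ∈ Set.range Complex.exp := by rw [Complex.range_exp]; exact hz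
    exact this
  -- w lies in some G n
  obtain ⟨n, hwn⟩ : ∃ n, w ∈ G n := by
    have : w ∈ ⋃ n, G n := by rw [hunion]; trivial
    simpa using this
  refine ⟨Complex.exp '' G n, Complex.isOpenMap_exp _ (hopen n), ?_, ?_, ?_, ?_⟩
  · rintro x ⟨y, -, rfl⟩
    exact Complex.exp_ne_zero y
  · -- bounded in ℂ*
    obtain ⟨M, hM⟩ := (hbdd n).subset_closedBall 0
    refine ⟨Real.exp (-M), Real.exp M, Real.exp_pos _, ?_⟩
    rintro x ⟨y, hy, rfl⟩
    have h1 : |y.re| ≤ M := by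
      have := hM hy
      simp only [Metric.mem_closedBall, Complex.dist_eq, sub_zero] at this
      exact (Complex.abs_re_le_norm y).trans this
    rw [abs_le] at h1
    constructor <;> rw [Complex.norm_exp]
    · exact Real.exp_le_exp.2 h1.1
    · exact Real.exp_le_exp.2 h1.2
  · exact ⟨w, hwn, hw⟩
  · -- frontier
    have hcomp : IsCompact (closure (G n)) := (hbdd n).isCompact_closure
    have hclo : closure (Complex.exp '' G n) ⊆ Complex.exp '' closure (G n) :=
      (hcomp.image Complex.continuous_exp).isClosed.closure_subset_iff.2
        (Set.image_mono subset_closure)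
    intro x hx
    have hxU : x ∉ Complex.exp '' G n := by
      have := hx.2
      rwa [(Complex.isOpenMap_exp _ (hopen n)).interior_eq] at this
    obtain ⟨y, hy, rfl⟩ := hclo hx.1
    by_cases hyG : y ∈ G n
    · exact absurd ⟨y, hyG, rfl⟩ hxU
    · exact ⟨y, hfront n ⟨hy, by rwa [(hopen n).interior_eq]⟩, rfl⟩
end

section
/- Let λ ≥ 2 and define f_λ(z) = λ z exp(e^{−z}/z) on ℂ*. If Re z ≥ 2, then Re f_λ(z) ≥ 0.7 λ Re z. In particular the right half-plane {Re z ≥ 2} is forward invariant under f_λ and Re f_λ^n(z) → ∞ as n → ∞ for z in this half-plane. -/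
open Complex Set Filter

/-- For `λ ≥ 2` and `f_λ(z) = λ z exp(e^{−z}/z)`: if `Re z ≥ 2` then
`Re f_λ(z) ≥ 0.7 λ Re z`; in particular the half-plane `{Re z ≥ 2}` is forward
invariant and real parts of orbits tend to `∞` there. -/
theorem stmt8 (lam : ℝ) (hlam : 2 ≤ lam) :
    let f : ℂ → ℂ := fun z => (lam : ℂ) * z * Complex.exp (Complex.exp (-z) / z)
    (∀ z : ℂ, 2 ≤ z.re → 0.7 * lam * z.re ≤ (f z).re) ∧
    MapsTo f {z : ℂ | 2 ≤ z.re} {z : ℂ | 2 ≤ z.re} ∧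
    (∀ z : ℂ, 2 ≤ z.re → Tendsto (fun n : ℕ => (f^[n] z).re) atTop atTop) := by
  intro f
  have hlam0 : (0:ℝ) ≤ lam := by linarith
  have hexp2 : (10:ℝ)/3 ≤ Real.exp 2 := by
    have h1 : (2:ℝ) ≤ Real.exp 1 := by
      have := Real.exp_one_gt_d9; linarith
    have : Real.exp 2 = Real.exp 1 * Real.exp 1 := by
      rw [← Real.exp_add]; norm_num
    nlinarith
  have key : ∀ z : ℂ, 2 ≤ z.re → 0.7 * lam * z.re ≤ (f z).re := by
    intro z hz
    have hzabs : 2 ≤ ‖z‖ := by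
      calc (2:ℝ) ≤ z.re := hz
        _ ≤ |z.re| := le_abs_self _
        _ ≤ ‖z‖ := Complex.abs_re_le_norm z
    have hz0 : (0:ℝ) < ‖z‖ := by linarith
    set w : ℂ := Complex.exp (-z) / z with hw
    have habsexp : ‖Complex.exp (-z)‖ = Real.exp (-z.re) := by
      rw [Complex.norm_exp]; simp
    have hexpsmall : Real.exp (-z.re) ≤ 0.3 := by
      have h1 : Real.exp (-z.re) ≤ Real.exp (-2) := by
        apply Real.exp_le_exp.2; linarith
      have h2 : Real.exp (-2) = 1 / Real.exp 2 := by
        rw [Real.exp_neg]; ring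
      have h3 : (1:ℝ)/Real.exp 2 ≤ 0.3 := by
        rw [div_le_iff₀ (by positivity)]; nlinarith
      linarith
    have hwabs : ‖w‖ = Real.exp (-z.re) / ‖z‖ := by
      rw [hw, norm_div, habsexp]
    have hw1 : ‖w‖ ≤ 1 := by
      rw [hwabs, div_le_one hz0]
      have := Real.exp_pos (-z.re)
      linarith
    have h2 : ‖Complex.exp w - 1‖ ≤ 2 * ‖w‖ :=
      Complex.norm_exp_sub_one_le hw1
    have h3 : ‖z * (Complex.exp w - 1)‖ ≤ 2 * Real.exp (-z.re) := by
      rw [norm_mul]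
      calc ‖z‖ * ‖Complex.exp w - 1‖
          ≤ ‖z‖ * (2 * ‖w‖) := by
            apply mul_le_mul_of_nonneg_left h2 (norm_nonneg z)
        _ = 2 * (‖z‖ * ‖w‖) := by ring
        _ = 2 * Real.exp (-z.re) := by
            rw [hwabs, mul_div_cancel₀ _ (ne_of_gt hz0)]
    have h4 : -(0.3 * z.re) ≤ (z * (Complex.exp w - 1)).re := by
      have := Complex.abs_re_le_norm (z * (Complex.exp w - 1))
      have habs := abs_le.1 (le_trans this (le_trans h3 (by linarith : 2 * Real.exp (-z.re) ≤ 0.6)))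
      nlinarith [habs.1]
    have hsplit : z * Complex.exp w = z + z * (Complex.exp w - 1) := by ring
    have hre : (f z).re = lam * (z * Complex.exp w).re := by
      show ((lam : ℂ) * z * Complex.exp w).re = _
      rw [mul_assoc]
      simp [Complex.mul_re, Complex.ofReal_re, Complex.ofReal_im]
    rw [hre, hsplit, Complex.add_re]
    have : 0.7 * z.re ≤ z.re + (z * (Complex.exp w - 1)).re := by nlinarith
    nlinarith
  have maps : MapsTo f {z : ℂ | 2 ≤ z.re} {z : ℂ | 2 ≤ z.re} := by
    intro z hz
    simp only [mem_setOf_eq] at hz ⊢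
    have := key z hz
    nlinarith
  refine ⟨key, maps, ?_⟩
  intro z hz
  have grow : ∀ n : ℕ, 2 ≤ (f^[n] z).re ∧ 2 * 1.4 ^ n ≤ (f^[n] z).re := by
    intro n
    induction n with
    | zero => simpa using hz
    | succ n ih =>
      obtain ⟨h1, h2⟩ := ih
      have hk := key (f^[n] z) h1
      rw [Function.iterate_succ_apply']
      constructor
      · nlinarith
      · have : 1.4 * (f^[n] z).re ≤ (f (f^[n] z)).re := by nlinarith
        calc (2:ℝ) * 1.4 ^ (n+1) = 1.4 * (2 * 1.4 ^ n) := by ring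
          _ ≤ 1.4 * (f^[n] z).re := by nlinarith
          _ ≤ _ := this
  apply tendsto_atTop_mono (fun n => (grow n).2)
  have h14 : Tendsto (fun n : ℕ => (1.4:ℝ) ^ n) atTop atTop :=
    tendsto_pow_atTop_atTop_of_one_lt (by norm_num)
  exact h14.const_mul_atTop (by norm_num)
end

section
/- Fix ε₀ = 1/4 and, for R ≥ 1, define the channel C⁺(R) = {z = x+iy : x > 0, |y| < ε₀ x, |z| < 1/R}. There exists K > 1 such that for every L > 1 there is R₀ > 1 with: for all z ∈ C⁺(R₀), |f_λ(z)| ≥ L/|z|, where f_λ(z) = λ z exp(e^{−z}/z), λ ≥ 32; moreover if z₀, z₁ ∈ C⁺(R₀) with |z₁/z₀| ≥ K, then |f_λ(z₀)/f_λ(z₁)| ≥ LK. -/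
open Complex Set

/-- The channel `C⁺(R)` near the origin along the positive real axis, with `ε₀ = 1/4`. -/
def Cplus (R : ℝ) : Set ℂ :=
  {z : ℂ | 0 < z.re ∧ |z.im| < (1 / 4) * z.re ∧ ‖z‖ < 1 / R}

lemma g_eq (z : ℂ) :
    (Complex.exp (-z) / z).re =
      Real.exp (-z.re) * (z.re * Real.cos z.im - z.im * Real.sin z.im) /
        (z.re ^ 2 + z.im ^ 2) := by
  rw [Complex.div_re, Complex.normSq_apply]
  simp [Complex.exp_re, Complex.exp_im, Real.cos_neg, Real.sin_neg]
  ring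

set_option maxHeartbeats 1000000 in
lemma real_g_bounds (x y a : ℝ) (hx : 0 < x) (hx' : x ≤ 1/10) (hy : |y| ≤ x/4)
    (ha_sq : a^2 = x^2 + y^2) (ha0 : 0 ≤ a) :
    1/(2*a) ≤ Real.exp (-x) * (x * Real.cos y - y * Real.sin y) / (x^2 + y^2) ∧
      Real.exp (-x) * (x * Real.cos y - y * Real.sin y) / (x^2 + y^2) ≤ 3/a := by
  have hy2 : y^2 ≤ x^2/16 := by nlinarith [_root_.sq_abs y, abs_nonneg y]
  have hx_le : x ≤ a := by nlinarith [sq_nonneg y]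
  have ha_pos : 0 < a := lt_of_lt_of_le hx hx_le
  have ha_le : a ≤ 2*x := by nlinarith
  have hD_pos : 0 < x^2 + y^2 := by positivity
  have hcos : 1 - y^2/2 ≤ Real.cos y := Real.one_sub_sq_div_two_le_cos
  have hcos1 : Real.cos y ≤ 1 := Real.cos_le_one y
  have hsin : |Real.sin y| ≤ |y| := Real.abs_sin_le_abs
  have hys : |y * Real.sin y| ≤ y^2 := by
    rw [abs_mul]
    calc |y| * |Real.sin y| ≤ |y| * |y| := by nlinarith [abs_nonneg y]
    _ = y^2 := by rw [← abs_mul, ← sq, _root_.abs_sq]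
  have hys1 : y * Real.sin y ≤ y^2 := (le_abs_self _).trans hys
  have hys2 : -(y^2) ≤ y * Real.sin y := by
    have := neg_abs_le (y * Real.sin y); linarith
  have hexp_le : Real.exp (-x) ≤ 1 := Real.exp_le_one_iff.2 (by linarith)
  have hexp_ge : 1 - x ≤ Real.exp (-x) := by
    have := Real.add_one_le_exp (-x); linarith
  have hexp_pos : 0 < Real.exp (-x) := Real.exp_pos _
  have hbr_lb : (99/100) * x ≤ x * Real.cos y - y * Real.sin y := by nlinarith
  have hN_lb : (4/5) * x ≤ Real.exp (-x) * (x * Real.cos y - y * Real.sin y) := by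
    nlinarith
  have hN_ub : Real.exp (-x) * (x * Real.cos y - y * Real.sin y) ≤ (3/2) * x := by
    nlinarith
  constructor
  · rw [div_le_div_iff₀ (by positivity) hD_pos]
    have h1 : (4/5)*x * (2*x) ≤ Real.exp (-x) * (x * Real.cos y - y * Real.sin y) * (2*a) := by
      apply mul_le_mul hN_lb (by linarith) (by linarith) (by nlinarith)
    nlinarith
  · rw [div_le_div_iff₀ hD_pos ha_pos]
    have h1 : Real.exp (-x) * (x * Real.cos y - y * Real.sin y) * a ≤ (3/2)*x * (2*x) := by
      apply mul_le_mul hN_ub ha_le ha_pos.le (by positivity)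
    nlinarith

lemma g_bounds (z : ℂ) (hx : 0 < z.re) (hx' : z.re ≤ 1/10) (hy : |z.im| ≤ z.re/4) :
    1/(2 * ‖z‖) ≤ (Complex.exp (-z) / z).re ∧
      (Complex.exp (-z) / z).re ≤ 3 / ‖z‖ := by
  have ha_sq : ‖z‖^2 = z.re^2 + z.im^2 := by
    rw [Complex.sq_norm, Complex.normSq_apply]; ring
  rw [g_eq]
  exact real_g_bounds z.re z.im ‖z‖ hx hx' hy ha_sq (norm_nonneg z)

lemma exp_ge_sq (s : ℝ) (hs : 0 ≤ s) : s^2/4 ≤ Real.exp s := by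
  have h1 : s/2 ≤ Real.exp (s/2) := by have := Real.add_one_le_exp (s/2); linarith
  have h2 : Real.exp (s/2) * Real.exp (s/2) = Real.exp s := by
    rw [← Real.exp_add]; ring_nf
  nlinarith [Real.exp_pos (s/2)]

lemma exp_ge_cube (s : ℝ) (hs : 0 ≤ s) : s^3/27 ≤ Real.exp s := by
  have h1 : s/3 ≤ Real.exp (s/3) := by have := Real.add_one_le_exp (s/3); linarith
  have h2 : Real.exp (s/3) * Real.exp (s/3) * Real.exp (s/3) = Real.exp s := by
    rw [← Real.exp_add, ← Real.exp_add]; ring_nf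
  have h3 : (s/3)^3 ≤ (Real.exp (s/3))^3 := pow_le_pow_left₀ (by positivity) h1 3
  nlinarith

set_option maxHeartbeats 2000000 in
/-- Blow-up in the channel `C⁺`: there is `K > 1` so that for every `L > 1` there is
`R₀ > 1` with: for `λ ≥ 32` and `z ∈ C⁺(R₀)`, `|f_λ(z)| ≥ L/|z|`; and if
`z₀, z₁ ∈ C⁺(R₀)` with `|z₁/z₀| ≥ K`, then `|f_λ(z₀)/f_λ(z₁)| ≥ LK`. -/
theorem stmt16 :
    ∃ K : ℝ, 1 < K ∧ ∀ L : ℝ, 1 < L → ∃ R₀ : ℝ, 1 < R₀ ∧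
      ∀ lam : ℝ, 32 ≤ lam →
        (∀ z ∈ Cplus R₀,
          L / ‖z‖ ≤
            ‖(lam : ℂ) * z * Complex.exp (Complex.exp (-z) / z)‖) ∧
        (∀ z₀ ∈ Cplus R₀, ∀ z₁ ∈ Cplus R₀, K ≤ ‖z₁ / z₀‖ →
          L * K ≤ ‖
            (((lam : ℂ) * z₀ * Complex.exp (Complex.exp (-z₀) / z₀)) /
             ((lam : ℂ) * z₁ * Complex.exp (Complex.exp (-z₁) / z₁)))‖) := by
  refine ⟨16, by norm_num, fun L hL => ⟨1024*L + 10, by nlinarith, fun lam hlam => ?_⟩⟩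
  set R₀ : ℝ := 1024*L + 10 with hR₀def
  have hR10 : (10:ℝ) ≤ R₀ := by rw [hR₀def]; nlinarith
  have hRpos : (0:ℝ) < R₀ := by linarith
  have hlam0 : (0:ℝ) < lam := by linarith
  -- basic facts in the channel
  have hchan : ∀ z ∈ Cplus R₀, 0 < ‖z‖ ∧ ‖z‖ < 1/R₀ ∧
      1/(2 * ‖z‖) ≤ (Complex.exp (-z) / z).re ∧
      (Complex.exp (-z) / z).re ≤ 3 / ‖z‖ := by
    intro z hz
    obtain ⟨hx, hy, hzR⟩ := hz
    have hxle : z.re ≤ ‖z‖ :=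
      (le_abs_self z.re).trans (Complex.abs_re_le_norm z)
    have hR10' : 1/R₀ ≤ 1/10 := by
      apply div_le_div_of_nonneg_left (by norm_num) (by norm_num) hR10
    have hx10 : z.re ≤ 1/10 := by linarith
    have hpos : 0 < ‖z‖ := lt_of_lt_of_le hx hxle
    obtain ⟨h1, h2⟩ := g_bounds z hx hx10 (by linarith [hy])
    exact ⟨hpos, hzR, h1, h2⟩
  -- absolute value of f
  have habs_f : ∀ (z : ℂ) (w : ℂ),
      ‖(lam : ℂ) * z * Complex.exp w‖ =
        lam * ‖z‖ * Real.exp w.re := by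
    intro z w
    rw [norm_mul, norm_mul, Complex.norm_exp, Complex.norm_real, Real.norm_eq_abs, _root_.abs_of_nonneg hlam0.le]
  constructor
  · -- part 1
    intro z hz
    obtain ⟨ht, htR, hg1, _⟩ := hchan z hz
    set t : ℝ := ‖z‖ with htdef
    set g : ℝ := (Complex.exp (-z) / z).re with hgdef
    rw [habs_f]
    rw [div_le_iff₀ ht]
    set s : ℝ := 1/(2*t) with hsdef
    have hts : t * s = 1/2 := by rw [hsdef]; field_simp
    have hs_pos : 0 < s := by rw [hsdef]; positivity
    have hsR : R₀/2 ≤ s := by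
      have h := (lt_div_iff₀ hRpos).1 htR
      rw [hsdef, le_div_iff₀ (by positivity)]
      nlinarith
    have hcube : s^3/27 ≤ Real.exp s := exp_ge_cube s hs_pos.le
    have hexp_mono : Real.exp s ≤ Real.exp g := Real.exp_le_exp.2 hg1
    have key : L ≤ lam * t * Real.exp s * t := by
      have h2 : t^2 * s^2 = 1/4 := by nlinarith
      have h3 : 32 * (t^2 * (s^3/27)) ≤ lam * (t^2 * Real.exp s) := by
        apply mul_le_mul hlam (by gcongr) (by positivity) hlam0.le
      have h4 : 32 * (t^2 * (s^3/27)) = (8/27) * s := by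
        have : t^2 * s^3 = (t^2*s^2) * s := by ring
        rw [show t^2 * (s^3/27) = (t^2*s^2) * s / 27 by ring, h2]; ring
      have h5 : L ≤ (8/27) * s := by nlinarith
      nlinarith
    have : lam * t * Real.exp s * t ≤ lam * t * Real.exp g * t := by gcongr
    linarith
  · -- part 2
    intro z₀ hz₀ z₁ hz₁ hK
    obtain ⟨ht₀, ht₀R, hg₀1, _⟩ := hchan z₀ hz₀
    obtain ⟨ht₁, ht₁R, _, hg₁2⟩ := hchan z₁ hz₁
    set t₀ : ℝ := ‖z₀‖ with ht₀def
    set t₁ : ℝ := ‖z₁‖ with ht₁def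
    set g₀ : ℝ := (Complex.exp (-z₀) / z₀).re with hg₀def
    set g₁ : ℝ := (Complex.exp (-z₁) / z₁).re with hg₁def
    rw [norm_div] at hK
    have h16 : 16 * t₀ ≤ t₁ := by
      rw [le_div_iff₀ ht₀] at hK; linarith
    rw [norm_div, habs_f, habs_f]
    rw [le_div_iff₀ (by positivity)]
    -- goal : L * 16 * (lam * t₁ * exp g₁) ≤ lam * t₀ * exp g₀
    set s : ℝ := 1/(4*t₀) with hsdef
    have hts : t₀ * s = 1/4 := by rw [hsdef]; field_simp
    have hs_pos : 0 < s := by rw [hsdef]; positivity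
    have hsR : R₀/4 ≤ s := by
      have h := (lt_div_iff₀ hRpos).1 ht₀R
      rw [hsdef, le_div_iff₀ (by positivity)]
      nlinarith
    -- g₀ ≥ s + g₁
    have hgap : s + g₁ ≤ g₀ := by
      have ha : g₁ ≤ 3/t₁ := hg₁2
      have hb : 3/t₁ ≤ 3/(16*t₀) := by
        apply div_le_div_of_nonneg_left (by norm_num) (by positivity) h16
      have hc : s + 3/(16*t₀) ≤ 1/(2*t₀) := by
        rw [hsdef, div_add_div _ _ (by positivity) (by positivity),
          div_le_div_iff₀ (by positivity) (by positivity)]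
        ring_nf
        nlinarith
      linarith
    have hsq : s^2/4 ≤ Real.exp s := exp_ge_sq s hs_pos.le
    -- key : 16 * L * t₁ ≤ t₀ * exp s
    have hkey : 16 * L * t₁ ≤ t₀ * Real.exp s := by
      have h1 : 16 * L * t₁ ≤ 16 * L / R₀ := by
        rw [div_eq_mul_inv]
        have : t₁ ≤ 1/R₀ := ht₁R.le
        have hL0 : (0:ℝ) < 16 * L := by linarith
        calc 16 * L * t₁ ≤ 16 * L * (1/R₀) := by
              apply mul_le_mul_of_nonneg_left this hL0.le
        _ = 16 * L * R₀⁻¹ := by rw [one_div]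
      have h2 : 16 * L / R₀ ≤ R₀ / 64 := by
        rw [div_le_div_iff₀ hRpos (by norm_num)]
        nlinarith
      have h3 : R₀/64 ≤ s/16 := by linarith
      have h4 : s/16 ≤ t₀ * Real.exp s := by
        have h5 : t₀ * (s^2/4) ≤ t₀ * Real.exp s := by gcongr
        have h6 : t₀ * (s^2/4) = (t₀ * s) * s / 4 := by ring
        rw [h6, hts] at h5
        linarith
      linarith
    have hexp0 : Real.exp (s + g₁) ≤ Real.exp g₀ := Real.exp_le_exp.2 hgap
    have hsplit : Real.exp (s + g₁) = Real.exp s * Real.exp g₁ := Real.exp_add s g₁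
    have hfinal : lam * (16 * L * t₁) * Real.exp g₁ ≤ lam * t₀ * Real.exp g₀ := by
      calc lam * (16 * L * t₁) * Real.exp g₁
          ≤ lam * (t₀ * Real.exp s) * Real.exp g₁ := by
            apply mul_le_mul_of_nonneg_right _ (Real.exp_pos g₁).le
            apply mul_le_mul_of_nonneg_left hkey hlam0.le
        _ = lam * t₀ * Real.exp (s + g₁) := by rw [hsplit]; ring
        _ ≤ lam * t₀ * Real.exp g₀ := by gcongr
    nlinarith [hfinal]
end
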